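/- Let X, Y be normed vector spaces, J̃ a bounded symmetric bilinear form on X weakly continuous in each argument with J(x) = J̃(x,x) ≥ 0 vanishing only at 0, and suppose the sublevel sets {x : J(x) ≤ c} are weakly compact for every c > 0. Let A : X → Y be a continuous surjective linear operator. Then for every y ∈ Y the problem of minimizing J over the affine set {x : Ax = y} has a global minimizer. -/

import Mathlib

/-- Weak convergence of a sequence in a normed space. -/
def WeakConv {X : Type*} [NormedAddCommGroup X] [NormedSpace ℝ X]
    (u : ℕ → X) (x : X) : Prop :=
  ∀ f : X →L[ℝ] ℝ, Filter.Tendsto (fun n => f (u n)) Filter.atTop (nhds (f x))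

/-- existence of a global minimizer of the quadratic form `J` on the
affine set `{x : A x = y}`. -/
theorem exists_global_minimizer
    {X Y : Type*} [NormedAddCommGroup X] [NormedSpace ℝ X]
    [NormedAddCommGroup Y] [NormedSpace ℝ Y]
    (Jt : X →ₗ[ℝ] X →ₗ[ℝ] ℝ)
    (hsymm : ∀ x y, Jt x y = Jt y x)
    (hbdd : ∃ M : ℝ, ∀ x y, |Jt x y| ≤ M * ‖x‖ * ‖y‖)
    (hweak : ∀ (y : X) (u : ℕ → X) (x : X), WeakConv u x →
      Filter.Tendsto (fun n => Jt (u n) y) Filter.atTop (nhds (Jt x y)))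
    (J : X → ℝ) (hJ : ∀ x, J x = Jt x x)
    (hpos : ∀ x, 0 ≤ J x)
    (hzero : ∀ x, J x = 0 → x = 0)
    (hcompact : ∀ c > (0:ℝ), ∀ u : ℕ → X, (∀ n, J (u n) ≤ c) →
      ∃ (x : X) (φ : ℕ → ℕ), StrictMono φ ∧ J x ≤ c ∧ WeakConv (u ∘ φ) x)
    (A : X →L[ℝ] Y) (hA : Function.Surjective A) :
    ∀ y : Y, ∃ xbar : X, A xbar = y ∧ ∀ x : X, A x = y → J xbar ≤ J x := by

  intro y
  -- the infimum of J over the feasible set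
  set S : Set ℝ := J '' {x | A x = y} with hS
  have hne : S.Nonempty := by
    obtain ⟨x0, hx0⟩ := hA y
    exact ⟨J x0, x0, hx0, rfl⟩
  have hbdS : BddBelow S := ⟨0, by rintro r ⟨x, -, rfl⟩; exact hpos x⟩
  set m : ℝ := sInf S with hm
  -- minimizing sequence
  have hu : ∀ n : ℕ, ∃ x : X, A x = y ∧ J x < m + 1 / (n + 1) := by
    intro n
    have hlt : m < m + 1 / (n + 1) := by
      have : (0:ℝ) < 1 / (n + 1) := by positivity
      linarith
    obtain ⟨r, hrS, hr⟩ := exists_lt_of_csInf_lt hne hlt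
    obtain ⟨x, hx, rfl⟩ := hrS
    exact ⟨x, hx, hr⟩
  choose u hAu hJu using hu
  have hm0 : 0 ≤ m := le_csInf hne (by rintro r ⟨x, -, rfl⟩; exact hpos x)
  have hmem : ∀ n, J (u n) ∈ S := fun n => ⟨u n, hAu n, rfl⟩
  have hlow : ∀ n, m ≤ J (u n) := fun n => csInf_le hbdS (hmem n)
  -- compactness
  have hc : (0:ℝ) < m + 1 := by linarith
  have hub : ∀ n, J (u n) ≤ m + 1 := by
    intro n
    have h1 : (1:ℝ) / (n + 1) ≤ 1 := by
      rw [div_le_one (by positivity)]; linarith [Nat.cast_nonneg (α := ℝ) n]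
    linarith [hJu n]
  obtain ⟨xbar, φ, hφ, -, hwc⟩ := hcompact (m + 1) hc u hub
  -- A xbar = y
  have hAxbar : A xbar = y := by
    have hz : A xbar - y = 0 := by
      apply NormedSpace.eq_zero_of_forall_dual_eq_zero ℝ
      intro g
      have h1 := hwc (g.comp A)
      have h2 : (fun n => (g.comp A) ((u ∘ φ) n)) = fun _ => g y := by
        funext n; simp [Function.comp, hAu (φ n)]
      rw [h2] at h1
      have := tendsto_nhds_unique h1 tendsto_const_nhds
      simp only [ContinuousLinearMap.comp_apply] at this
      simp [map_sub, this]
    exact sub_eq_zero.mp hz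
  -- J (u (φ n)) → m
  have hφn : ∀ n : ℕ, (n:ℝ) ≤ (φ n : ℝ) := fun n => by exact_mod_cast hφ.le_apply
  have hLm : Filter.Tendsto (fun n => J (u (φ n))) Filter.atTop (nhds m) := by
    have hupper : Filter.Tendsto (fun n : ℕ => m + 1 / (n + 1)) Filter.atTop (nhds m) := by
      have := tendsto_one_div_add_atTop_nhds_zero_nat (𝕜 := ℝ)
      have h := this.const_add m
      simpa using h
    refine tendsto_of_tendsto_of_tendsto_of_le_of_le tendsto_const_nhds hupper
      (fun n => hlow (φ n)) (fun n => ?_)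
    have h1 : (1:ℝ) / (φ n + 1) ≤ 1 / (n + 1) := by
      apply one_div_le_one_div_of_le (by positivity)
      linarith [hφn n]
    linarith [hJu (φ n)]
  -- weak lsc inequality
  have hexp : ∀ n, 2 * Jt (u (φ n)) xbar - J xbar ≤ J (u (φ n)) := by
    intro n
    have h0 := hpos (u (φ n) - xbar)
    rw [hJ] at h0
    simp only [map_sub, LinearMap.sub_apply] at h0
    have hs := hsymm xbar (u (φ n))
    rw [hJ, hJ]
    linarith
  have hL2 : Filter.Tendsto (fun n => 2 * Jt (u (φ n)) xbar - J xbar)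
      Filter.atTop (nhds (J xbar)) := by
    have h := hweak xbar (u ∘ φ) xbar hwc
    have h2 := (h.const_mul 2).sub_const (J xbar)
    have : 2 * Jt xbar xbar - J xbar = J xbar := by rw [hJ]; ring
    rw [this] at h2
    exact h2
  have hfin : J xbar ≤ m := le_of_tendsto_of_tendsto' hL2 hLm hexp
  exact ⟨xbar, hAxbar, fun x hx => hfin.trans (csInf_le hbdS ⟨x, hx, rfl⟩)⟩
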